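/- Let G be a finite permutation group on a set Ω of size 2n with exactly two orbits, each of length n, let p be a prime, let P be a Sylow p-subgroup of G, and suppose n = b·p with b < (p+1)/2. Then P contains a derangement, i.e., an element of P fixing no point of Ω. -/
import Mathlib

/-- Let `G` be a finite permutation group on a set `Ω` of size `2n` with exactly two
orbits, each of length `n`, let `p` be a prime, let `P` be a Sylow `p`-subgroup of `G`,
and suppose `n = b·p` with `b < (p+1)/2` (equivalently `2b < p + 1`). Then `P` contains
a derangement, i.e. an element of `P` fixing no point of `Ω`. -/
theorem stmt_6 {G Ω : Type*} [Group G] [Fintype G] [Fintype Ω] [MulAction G Ω]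
    [FaithfulSMul G Ω] {n b p : ℕ} (hp : p.Prime) (P : Sylow p G)
    (hn : n = b * p) (hb : 2 * b < p + 1)
    (hcard : Fintype.card Ω = 2 * n)
    (horbits : Nat.card (MulAction.orbitRel.Quotient G Ω) = 2)
    (hlen : ∀ ω : Ω, (MulAction.orbit G ω).ncard = n) :
    ∃ g : ↥(P : Subgroup G), ∀ ω : Ω, g • ω ≠ ω := by
  classical
  haveI : Fact p.Prime := ⟨hp⟩
  by_contra hcon
  push_neg at hcon
  have hp2 : 2 ≤ p := hp.two_le
  -- `Ω` is nonempty, hence `b ≥ 1`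
  have hb1 : 1 ≤ b := by
    by_contra hB
    have hb0 : b = 0 := by omega
    have hΩ0 : Fintype.card Ω = 0 := by
      rw [hcard, hn, hb0]; ring
    haveI hE : IsEmpty Ω := Fintype.card_eq_zero_iff.mp hΩ0
    haveI : IsEmpty (MulAction.orbitRel.Quotient G Ω) := by
      constructor
      intro q
      obtain ⟨ω, -⟩ := Quotient.exists_rep q
      exact hE.false ω
    rw [Nat.card_of_isEmpty] at horbits
    omega
  set k := (Nat.card G).factorization p with hk
  have hPcard : Nat.card ↥(P : Subgroup G) = p ^ k := P.card_eq_multiplicity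
  have hGpos : Nat.card G ≠ 0 := Nat.card_pos.ne'
  have hdvdG : ¬ p ^ (k + 1) ∣ Nat.card G := Nat.pow_succ_factorization_not_dvd hGpos hp
  have horb : ∀ ω : Ω, Nat.card (MulAction.orbit G ω) = b * p := by
    intro ω
    rw [Nat.card_coe_set_eq, hlen ω, hn]
  -- Lemma A : each point stabilizer in P has index at least p
  have hA : ∀ ω : Ω,
      p * Nat.card (MulAction.stabilizer ↥(P : Subgroup G) ω) ≤ p ^ k := by
    intro ω
    obtain ⟨j, hj⟩ := IsPGroup.iff_card.mp
      (P.isPGroup'.to_subgroup (MulAction.stabilizer ↥(P : Subgroup G) ω))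
    have hdvd : Nat.card (MulAction.stabilizer ↥(P : Subgroup G) ω)
        ∣ Nat.card ↥(P : Subgroup G) :=
      Subgroup.card_subgroup_dvd_card _
    rw [hj, hPcard] at hdvd
    have hjk : j ≤ k := (Nat.pow_dvd_pow_iff_le_right hp.one_lt).mp hdvd
    have hjk' : j < k := by
      rcases lt_or_eq_of_le hjk with h | h
      · exact h
      · exfalso
        -- then the stabilizer is all of P, so P fixes ω
        have hcards : Nat.card (MulAction.stabilizer ↥(P : Subgroup G) ω)
            = Nat.card ↥(P : Subgroup G) := by rw [hj, hPcard, h]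
        have htop : MulAction.stabilizer ↥(P : Subgroup G) ω = ⊤ :=
          Subgroup.eq_top_of_card_eq _ hcards
        have hle : (P : Subgroup G) ≤ MulAction.stabilizer G ω := by
          intro x hx
          have hx' : (⟨x, hx⟩ : ↥(P : Subgroup G))
              ∈ MulAction.stabilizer ↥(P : Subgroup G) ω := by
            rw [htop]; exact Subgroup.mem_top _
          have := MulAction.mem_stabilizer_iff.mp hx'
          rw [Subgroup.smul_def] at this
          exact MulAction.mem_stabilizer_iff.mpr this
        have hd1 : Nat.card ↥(P : Subgroup G)
            ∣ Nat.card (MulAction.stabilizer G ω) :=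
          Subgroup.card_dvd_of_le hle
        have hos : Nat.card (MulAction.orbit G ω)
            * Nat.card (MulAction.stabilizer G ω) = Nat.card G := by
          simp only [Nat.card_eq_fintype_card]
          exact MulAction.card_orbit_mul_card_stabilizer_eq_card_group G ω
        apply hdvdG
        rw [← hos, horb ω]
        rw [hPcard] at hd1
        obtain ⟨c, hc⟩ := hd1
        rw [hc, pow_succ]
        exact ⟨b * c, by ring⟩
    calc p * Nat.card (MulAction.stabilizer ↥(P : Subgroup G) ω)
        = p ^ (j + 1) := by rw [hj, pow_succ]; ring
      _ ≤ p ^ k := Nat.pow_le_pow_right hp.pos hjk'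
  -- Lemma B : every element of P fixes at least p points
  have hB : ∀ g : ↥(P : Subgroup G),
      p ≤ (Finset.univ.filter fun ω : Ω => g • ω = ω).card := by
    intro g
    obtain ⟨ω₀, hg⟩ := hcon g
    set H := Subgroup.zpowers g with hH
    have hHp : IsPGroup p ↥H := P.isPGroup'.to_subgroup H
    have hmod := hHp.card_modEq_card_fixedPoints Ω
    have hgstab : g ∈ MulAction.stabilizer ↥(P : Subgroup G) ω₀ :=
      MulAction.mem_stabilizer_iff.mpr hg
    have hfixmem : ω₀ ∈ MulAction.fixedPoints ↥H Ω := by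
      rw [MulAction.mem_fixedPoints]
      intro h
      obtain ⟨m, hm⟩ := Subgroup.mem_zpowers_iff.mp h.2
      have hmem : (h : ↥(P : Subgroup G))
          ∈ MulAction.stabilizer ↥(P : Subgroup G) ω₀ := by
        rw [← hm]; exact Subgroup.zpow_mem _ hgstab m
      have := MulAction.mem_stabilizer_iff.mp hmem
      rw [← Subgroup.smul_def] at this
      exact this
    haveI : Nonempty (MulAction.fixedPoints ↥H Ω) := ⟨⟨ω₀, hfixmem⟩⟩
    have hpos : 0 < Nat.card (MulAction.fixedPoints ↥H Ω) := Nat.card_pos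
    have hΩc : Nat.card Ω = 2 * (b * p) := by
      rw [Nat.card_eq_fintype_card, hcard, hn]
    have hdvdfix : p ∣ Nat.card (MulAction.fixedPoints ↥H Ω) := by
      have h0 : Nat.card Ω ≡ 0 [MOD p] := by
        rw [hΩc]
        exact (Nat.modEq_zero_iff_dvd).mpr ⟨2 * b, by ring⟩
      exact (Nat.modEq_zero_iff_dvd).mp (hmod.symm.trans h0)
    have hple : p ≤ Nat.card (MulAction.fixedPoints ↥H Ω) :=
      Nat.le_of_dvd hpos hdvdfix
    refine le_trans hple ?_
    have hsub : MulAction.fixedPoints ↥H Ω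
        ⊆ ↑(Finset.univ.filter fun ω : Ω => g • ω = ω) := by
      intro ω hω
      simp only [Finset.coe_filter, Finset.mem_univ, true_and, Set.mem_setOf_eq]
      have := MulAction.mem_fixedPoints.mp hω ⟨g, Subgroup.mem_zpowers g⟩
      rw [Subgroup.smul_def] at this
      exact this
    calc Nat.card (MulAction.fixedPoints ↥H Ω)
        = (MulAction.fixedPoints ↥H Ω).ncard := (Nat.card_coe_set_eq _)
      _ ≤ (↑(Finset.univ.filter fun ω : Ω => g • ω = ω) : Set Ω).ncard :=
          Set.ncard_le_ncard hsub (Set.toFinite _)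
      _ = (Finset.univ.filter fun ω : Ω => g • ω = ω).card :=
          Set.ncard_coe_finset _
  -- double counting
  have hswap : ∑ g : ↥(P : Subgroup G),
      (Finset.univ.filter fun ω : Ω => g • ω = ω).card
      = ∑ ω : Ω, (Finset.univ.filter fun g : ↥(P : Subgroup G) => g • ω = ω).card := by
    simp_rw [Finset.card_filter]
    exact Finset.sum_comm
  have hSω : ∀ ω : Ω, (Finset.univ.filter fun g : ↥(P : Subgroup G) => g • ω = ω).card
      = Nat.card (MulAction.stabilizer ↥(P : Subgroup G) ω) := by
    intro ω
    rw [Nat.card_eq_fintype_card, Fintype.card_subtype]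
    congr 1
  -- the upper bound
  have hupper : p * (∑ g : ↥(P : Subgroup G),
      (Finset.univ.filter fun ω : Ω => g • ω = ω).card) ≤ 2 * (b * p) * p ^ k := by
    rw [hswap, Finset.mul_sum]
    calc ∑ ω : Ω, p * (Finset.univ.filter fun g : ↥(P : Subgroup G) => g • ω = ω).card
        ≤ ∑ _ω : Ω, p ^ k := by
          refine Finset.sum_le_sum fun ω _ => ?_
          rw [hSω ω]; exact hA ω
      _ = Fintype.card Ω * p ^ k := by
          rw [Finset.sum_const, smul_eq_mul, Finset.card_univ]
      _ = 2 * (b * p) * p ^ k := by rw [hcard, hn]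
  -- the lower bound
  have hone : ((Finset.univ.filter fun ω : Ω => (1 : ↥(P : Subgroup G)) • ω = ω).card)
      = 2 * (b * p) := by
    simp only [one_smul, Finset.filter_true, Finset.card_univ]
    rw [hcard, hn]
  have hcardP : Fintype.card ↥(P : Subgroup G) = p ^ k := by
    rw [← Nat.card_eq_fintype_card]; exact hPcard
  have hlower : 2 * (b * p) + (p ^ k - 1) * p
      ≤ ∑ g : ↥(P : Subgroup G), (Finset.univ.filter fun ω : Ω => g • ω = ω).card := by
    rw [← Finset.sum_erase_add _ _ (Finset.mem_univ (1 : ↥(P : Subgroup G)))]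
    rw [hone]
    rw [add_comm]
    refine Nat.add_le_add_right ?_ _
    calc (p ^ k - 1) * p
        = (Finset.univ.erase (1 : ↥(P : Subgroup G))).card * p := by
          rw [Finset.card_erase_of_mem (Finset.mem_univ _), Finset.card_univ, hcardP]
      _ ≤ ∑ g ∈ Finset.univ.erase (1 : ↥(P : Subgroup G)),
            (Finset.univ.filter fun ω : Ω => g • ω = ω).card := by
          rw [← smul_eq_mul]
          exact Finset.card_nsmul_le_sum _ _ _ fun g _ => hB g
  -- combine
  have hmain : p * (2 * (b * p) + (p ^ k - 1) * p) ≤ 2 * (b * p) * p ^ k :=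
    le_trans (Nat.mul_le_mul_left p hlower) hupper
  have hKpos : 1 ≤ p ^ k := Nat.one_le_pow _ _ hp.pos
  -- rewrite : 2*b*p*p + (p^k)*p*p - p*p ≤ 2*b*p*p^k ≤ p*p*p^k
  have h2bp : 2 * (b * p) ≤ p * p := by
    have : 2 * b ≤ p := by omega
    calc 2 * (b * p) = (2 * b) * p := by ring
      _ ≤ p * p := Nat.mul_le_mul_right p this
  have hrhs : 2 * (b * p) * p ^ k ≤ p * p * p ^ k := Nat.mul_le_mul_right _ h2bp
  have hexp : p * (2 * (b * p) + (p ^ k - 1) * p)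
      = 2 * (b * p) * p + (p ^ k * (p * p) - p * p) := by
    rw [Nat.sub_mul, one_mul, Nat.mul_add, Nat.mul_sub]
    ring_nf
  have hfinal : 2 * (b * p) * p + (p ^ k * (p * p) - p * p) ≤ p * p * p ^ k := by
    rw [← hexp]; exact le_trans hmain hrhs
  have hXK : p * p ≤ p ^ k * (p * p) := Nat.le_mul_of_pos_left _ (by omega)
  have hcomm : p * p * p ^ k = p ^ k * (p * p) := by ring
  rw [hcomm] at hfinal
  -- deduce 2 * (b * p) * p ≤ p * p, i.e. 2 * b ≤ 1
  have h2 : 2 * (b * p) * p ≤ p * p := by omega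
  have h3 : (2 * b) * (p * p) ≤ 1 * (p * p) := by
    calc (2 * b) * (p * p) = 2 * (b * p) * p := by ring
      _ ≤ p * p := h2
      _ = 1 * (p * p) := by ring
  have h4 : 2 * b ≤ 1 := Nat.le_of_mul_le_mul_right h3 (by positivity)
  omega
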